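/- The matrix B ∈ GL(n,ℤ) defined by b_{ii}=1 for all i, b_{i,n}=1 for 1 ≤ i ≤ n-1, b_{n,n-1}=2, b_{n,n}=1, and zeros elsewhere, has eigenvalue 1 with multiplicity n-2, and two further eigenvalues 1+√2 and 1-√2, each simple. -/

import Mathlib

open Polynomial Matrix


/-- For `n ≥ 3`, the integer matrix `B` with `b_{ii} = 1`, `b_{i,n} = 1` for
`1 ≤ i ≤ n-1`, `b_{n,n-1} = 2`, `b_{n,n} = 1`, and zeros elsewhere, has (over `ℝ`) the
eigenvalue `1` with multiplicity `n - 2`, and two further simple eigenvalues `1 + √2` and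
`1 - √2`. -/
theorem eigenvalues_of_example_matrix
    (n : ℕ) (hn : 3 ≤ n)
    (B : Matrix (Fin n) (Fin n) ℝ)
    (hB : ∀ i j : Fin n, B i j =
      (if i = j then 1 else 0) +
      (if (j : ℕ) = n - 1 ∧ (i : ℕ) ≠ n - 1 then 1 else 0) +
      (if (i : ℕ) = n - 1 ∧ (j : ℕ) = n - 2 then 2 else 0)) :
    (B.charpoly.rootMultiplicity 1 = n - 2) ∧
      (B.charpoly.rootMultiplicity (1 + Real.sqrt 2) = 1) ∧
      (B.charpoly.rootMultiplicity (1 - Real.sqrt 2) = 1) := by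
  have hs2 : Real.sqrt 2 ^ 2 = 2 := Real.sq_sqrt (by norm_num)
  have hspos : (0:ℝ) < Real.sqrt 2 := Real.sqrt_pos.2 (by norm_num)
  set s := Real.sqrt 2 with hs
  have key : B.charpoly
      = (X - C 1)^(n-2) * ((X - C (1+s)) * (X - C (1-s))) := by
    apply Polynomial.eq_of_infinite_eval_eq
    have hsub : {x : ℝ | x ≠ 1} ⊆
        {x : ℝ | eval x B.charpoly
          = eval x ((X - C 1)^(n-2) * ((X - C (1+s)) * (X - C (1-s))))} := by
      intro x hx
      have hx : x ≠ 1 := hx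
      set c := x - 1 with hcdef
      have hc0 : c ≠ 0 := sub_ne_zero.2 hx
      -- eval of charpoly as determinant
      have hev : B.charpoly.eval x = (Matrix.scalar (Fin n) x - B).det := by
        rw [Matrix.charpoly, ← Polynomial.coe_evalRingHom, RingHom.map_det]
        congr 1
        ext i j
        by_cases h : i = j <;>
          simp [h, Matrix.charmatrix_apply, Matrix.scalar_apply, Matrix.diagonal_apply,
            Matrix.sub_apply]
      set e1 : Fin n := ⟨n-1, by omega⟩ with he1
      set e2 : Fin n := ⟨n-2, by omega⟩ with he2
      have he12 : e2 ≠ e1 := by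
        simp only [he1, he2, Fin.ext_iff, ne_eq]; omega
      set U : Matrix (Fin n) (Fin 2) ℝ := fun i k =>
        if k = 0 then (if i = e1 then 0 else -1) else (if i = e1 then -2 else 0) with hU
      set V : Matrix (Fin 2) (Fin n) ℝ := fun k j =>
        if k = 0 then (if j = e1 then 1 else 0) else (if j = e2 then 1 else 0) with hV
      have hdecomp : Matrix.scalar (Fin n) x - B = c • (1 + (c⁻¹ • U) * V) := by
        ext i j
        have hi1 : ((i:ℕ) = n - 1) ↔ (i = e1) := by rw [Fin.ext_iff]
        have hj1 : ((j:ℕ) = n - 1) ↔ (j = e1) := by rw [Fin.ext_iff]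
        have hj2 : ((j:ℕ) = n - 2) ↔ (j = e2) := by rw [Fin.ext_iff]
        simp only [Matrix.smul_apply, Matrix.add_apply, Matrix.mul_apply, Fin.sum_univ_two]
        simp only [Matrix.sub_apply, Matrix.scalar_apply, Matrix.diagonal_apply, hB,
          Matrix.smul_apply, Matrix.add_apply, Matrix.one_apply, Matrix.mul_apply,
          Fin.sum_univ_two, hU, hV, hi1, hj1, hj2, smul_eq_mul]
        by_cases h : i = j <;> by_cases h1 : i = e1 <;> by_cases h2 : j = e1 <;>
          by_cases h3 : j = e2 <;>
          simp_all <;> field_simp <;> ring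
      have hsum : ∀ (k l : Fin 2), (V * (c⁻¹ • U)) k l
          = c⁻¹ * U (if k = 0 then e1 else e2) l := by
        intro k l
        rw [Matrix.mul_apply, Finset.sum_eq_single (if k = 0 then e1 else e2)]
        · by_cases hk : k = 0 <;> simp [hk, hV, Matrix.smul_apply, smul_eq_mul]
        · intro j _ hj
          refine mul_eq_zero.2 (Or.inl ?_)
          by_cases hk : k = 0
          · rw [if_pos hk] at hj
            rw [hV]; simp [hk, hj]
          · rw [if_neg hk] at hj
            rw [hV]; simp [hk, hj]
        · simp
      have hdet2 : (1 + V * (c⁻¹ • U)).det = 1 - 2 * (c⁻¹ * c⁻¹) := by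
        rw [Matrix.det_fin_two]
        simp only [Matrix.add_apply, Matrix.one_apply, hsum]
        simp [hU, he12]
        ring
      have hdet : (Matrix.scalar (Fin n) x - B).det = c^(n-2) * (c^2 - 2) := by
        rw [hdecomp, Matrix.det_smul, Matrix.det_one_add_mul_comm, hdet2, Fintype.card_fin]
        have hcn : c ^ n = c ^ (n-2) * c ^ 2 := by
          rw [← pow_add]; congr 1; omega
        rw [hcn]; field_simp
      rw [Set.mem_setOf_eq, hev, hdet]
      simp only [eval_mul, eval_pow, eval_sub, eval_X, eval_C]
      have : (x - (1+s)) * (x - (1-s)) = c^2 - s^2 := by rw [hcdef]; ring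
      rw [this, hs2, hcdef]
    exact Set.Infinite.mono hsub ((Set.finite_singleton (1:ℝ)).infinite_compl)
  have hne1 : (X - C (1:ℝ)) ≠ 0 := X_sub_C_ne_zero 1
  have hnea : (X - C (1+s)) ≠ 0 := X_sub_C_ne_zero _
  have hneb : (X - C (1-s)) ≠ 0 := X_sub_C_ne_zero _
  have hd1 : (1:ℝ) ≠ 1 + s := by intro h; nlinarith
  have hd2 : (1:ℝ) ≠ 1 - s := by intro h; nlinarith
  have hd3 : (1:ℝ) + s ≠ 1 - s := by intro h; nlinarith
  have hmul_ne : ((X - C (1:ℝ))^(n-2) * ((X - C (1+s)) * (X - C (1-s)))) ≠ 0 :=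
    mul_ne_zero (pow_ne_zero _ hne1) (mul_ne_zero hnea hneb)
  have hab_ne : ((X - C ((1:ℝ)+s)) * (X - C (1-s))) ≠ 0 := mul_ne_zero hnea hneb
  have hd3' : (1:ℝ) - s ≠ 1 + s := fun h => hd3 h.symm
  have hz1 : Polynomial.rootMultiplicity (1+s) ((X - C (1:ℝ))^(n-2)) = 0 := by
    apply Polynomial.rootMultiplicity_eq_zero
    simp only [Polynomial.IsRoot, eval_pow, eval_sub, eval_X, eval_C]
    have h : (1:ℝ) + s - 1 = s := by ring
    rw [h]
    exact pow_ne_zero _ (ne_of_gt hspos)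
  have hz2 : Polynomial.rootMultiplicity (1-s) ((X - C (1:ℝ))^(n-2)) = 0 := by
    apply Polynomial.rootMultiplicity_eq_zero
    simp only [Polynomial.IsRoot, eval_pow, eval_sub, eval_X, eval_C]
    have h : (1:ℝ) - s - 1 = -s := by ring
    rw [h]
    exact pow_ne_zero _ (neg_ne_zero.2 (ne_of_gt hspos))
  rw [key]
  rw [Polynomial.rootMultiplicity_mul hmul_ne, Polynomial.rootMultiplicity_mul hmul_ne,
    Polynomial.rootMultiplicity_mul hmul_ne]
  rw [Polynomial.rootMultiplicity_mul hab_ne, Polynomial.rootMultiplicity_mul hab_ne,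
    Polynomial.rootMultiplicity_mul hab_ne]
  have hz : ∀ a b : ℝ, a ≠ b → Polynomial.rootMultiplicity a (X - C b) = 0 := by
    intro a b h
    exact Polynomial.rootMultiplicity_eq_zero (by simp [Polynomial.IsRoot, sub_eq_zero, h])
  refine ⟨?_, ?_, ?_⟩
  · rw [Polynomial.rootMultiplicity_X_sub_C_pow, hz 1 (1+s) hd1, hz 1 (1-s) hd2]
    omega
  · rw [hz1, hz _ _ hd3, Polynomial.rootMultiplicity_X_sub_C_self]
  · rw [hz2, hz _ _ hd3', Polynomial.rootMultiplicity_X_sub_C_self]
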